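/- The extended product (a, g) •_{ln} (b, g') = ((a+b)/(1+ab), g + g' + Log(1+ab)) on pairs in ℂ² is associative modulo 2πiℤ: the second components of ((a,g) •_{ln} (b,g')) •_{ln} (c,g'') and (a,g) •_{ln} ((b,g') •_{ln} (c,g'')) differ by an element of 2πiℤ, and their first components are equal, whenever all the relevant quantities 1+ab, 1+bc, 1+(a•₀b)c, 1+a(b•₀c) are nonzero. -/
import Mathlib


open Complex Real

/-- The tanh addition law `a •₀ b = (a+b)/(1+ab)`. -/
noncomputable def bullet0 (a b : ℂ) : ℂ := (a + b) / (1 + a * b)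

/-- The extended product `(a,g) •_{ln} (b,g') = (a •₀ b, g + g' + Log(1+ab))`. -/
noncomputable def prodLn (p q : ℂ × ℂ) : ℂ × ℂ :=
  (bullet0 p.1 q.1, p.2 + q.2 + Complex.log (1 + p.1 * q.1))

/-- The extended product is associative modulo `2πiℤ` in the second component,
with equal first components, whenever the relevant denominators are nonzero. -/
theorem prodLn_assoc_mod (a b c g g' g'' : ℂ)
    (hab : 1 + a * b ≠ 0) (hbc : 1 + b * c ≠ 0)
    (h1 : 1 + bullet0 a b * c ≠ 0) (h2 : 1 + a * bullet0 b c ≠ 0) :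
    (prodLn (prodLn (a, g) (b, g')) (c, g'')).1
      = (prodLn (a, g) (prodLn (b, g') (c, g''))).1 ∧
    ∃ n : ℤ,
      (prodLn (prodLn (a, g) (b, g')) (c, g'')).2
        - (prodLn (a, g) (prodLn (b, g') (c, g''))).2 = 2 * π * I * n := by
  constructor
  · simp only [prodLn, bullet0]
    field_simp
    ring
  · have key : Complex.exp ((prodLn (prodLn (a, g) (b, g')) (c, g'')).2)
        = Complex.exp ((prodLn (a, g) (prodLn (b, g') (c, g''))).2) := by
      simp only [prodLn]
      simp only [Complex.exp_add]
      rw [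
        Complex.exp_log hab, Complex.exp_log h1, Complex.exp_log hbc, Complex.exp_log h2]
      have hmul : (1 + a * b) * (1 + bullet0 a b * c)
          = (1 + b * c) * (1 + a * bullet0 b c) := by
        simp only [bullet0]
        field_simp
        ring
      calc Complex.exp g * Complex.exp g' * (1 + a * b) * Complex.exp g''
              * (1 + bullet0 a b * c)
          = Complex.exp g * Complex.exp g' * Complex.exp g''
              * ((1 + a * b) * (1 + bullet0 a b * c)) := by ring
        _ = Complex.exp g * Complex.exp g' * Complex.exp g''
              * ((1 + b * c) * (1 + a * bullet0 b c)) := by rw [hmul]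
        _ = Complex.exp g * (Complex.exp g' * Complex.exp g'' * (1 + b * c))
              * (1 + a * bullet0 b c) := by ring
    rw [Complex.exp_eq_exp_iff_exists_int] at key
    obtain ⟨n, hn⟩ := key
    exact ⟨n, by rw [hn]; ring⟩
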